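/- In the CG-Lanczos recurrence, with p_j = σ_j v_j + ω_{j-1} p_{j-1}, r_j = σ_j v_j, M-conjugacy p_j^T M p_{j-1} = 0, orthogonality r_j^T r_{j-1} = 0, δ_j = v_j^T M v_j, and γ_j = 1/(δ_j - ω_{j-1}/γ_{j-1}), one has p_j^T M p_j = σ_j²/γ_j. Hence p_j^T M p_j has the same sign as γ_j. -/

import Mathlib

open scoped RealInnerProductSpace

theorem stmt10 (n : ℕ)
    (M : EuclideanSpace ℝ (Fin n) →L[ℝ] EuclideanSpace ℝ (Fin n))
    (hM : IsSelfAdjoint M)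
    (vj pprev pj rprev rj xprev xj : EuclideanSpace ℝ (Fin n))
    (σj δj γprev γj ωprev : ℝ)
    (hσ : σj ≠ 0) (hγprev : γprev ≠ 0) (hγj : γj ≠ 0)
    (hrv : rj = σj • vj) (hv : ‖vj‖ = 1)
    (hp : pj = rj + ωprev • pprev)
    (hx : xj = xprev + γprev • pprev)
    (hr : rj = rprev - γprev • M pprev)
    (hconj : ⟪pj, M pprev⟫ = 0)
    (horth : ⟪rj, rprev⟫ = 0)
    (hδ : δj = ⟪vj, M vj⟫)
    (hγ : γj = 1 / (δj - ωprev / γprev)) :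
    ⟪pj, M pj⟫ = σj^2 / γj ∧ (0 < ⟪pj, M pj⟫ ↔ 0 < γj) := by
  have hsym : ∀ x y : EuclideanSpace ℝ (Fin n), ⟪M x, y⟫ = ⟪x, M y⟫ :=
    fun x y => hM.isSymmetric x y
  -- ⟪rj, rj⟫ = σj^2
  have hrr : ⟪rj, rj⟫ = σj ^ 2 := by
    rw [hrv, real_inner_smul_left, real_inner_smul_right,
      real_inner_self_eq_norm_sq, hv]
    ring
  -- M pprev expressed via residuals
  have hMp : γprev • M pprev = rprev - rj := by
    rw [hr]; abel
  have hpMr : ⟪pprev, M rj⟫ = -σj ^ 2 / γprev := by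
    have h1 : ⟪γprev • M pprev, rj⟫ = ⟪rprev - rj, rj⟫ := by rw [hMp]
    have horth' : ⟪rprev, rj⟫ = (0:ℝ) := by rw [← horth]; exact real_inner_comm rj rprev
    rw [real_inner_smul_left, inner_sub_left, horth', hrr, hsym] at h1
    rw [eq_div_iff hγprev]
    linarith
  have hrMr : ⟪rj, M rj⟫ = σj ^ 2 * δj := by
    rw [hrv, map_smul, real_inner_smul_left, real_inner_smul_right, hδ]
    ring
  have hinv : δj - ωprev / γprev = 1 / γj := by
    rcases eq_or_ne (δj - ωprev / γprev) 0 with h | h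
    · rw [h] at hγ; simp at hγ; exact absurd hγ hγj
    · rw [hγ, one_div_one_div]
  have key : ⟪pj, M pj⟫ = σj ^ 2 / γj := by
    have : ⟪pj, M pj⟫ = ⟪pj, M rj⟫ := by
      rw [show M pj = M rj + ωprev • M pprev from by rw [hp, map_add, map_smul],
        inner_add_right, real_inner_smul_right, hconj]
      ring
    rw [this, hp, inner_add_left, real_inner_smul_left, hrMr, hpMr]
    have : σj ^ 2 * δj + ωprev * (-σj ^ 2 / γprev) = σj ^ 2 * (δj - ωprev / γprev) := by
      field_simp; ring
    rw [this, hinv]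
    field_simp
  refine ⟨key, ?_⟩
  rw [key]
  have hσ2 : 0 < σj ^ 2 := by positivity
  constructor
  · intro h
    by_contra hneg
    push_neg at hneg
    rcases lt_or_eq_of_le hneg with h' | h'
    · have : σj ^ 2 / γj < 0 := div_neg_of_pos_of_neg hσ2 h'
      linarith
    · exact hγj h'
  · intro h; positivity
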